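/- Let s ≥ 3 be an integer and set r = 2s. Let U_s = {0, 1, …, s−1}. Then the product over all unordered pairs {a, b} of distinct elements of U_s of 16·sin²(π(a−b)/r)·sin²(π(a+b)/r) equals r^{s−1}. -/

import Mathlib

open Real Finset

noncomputable def Complex.abs : ℂ →*₀ ℝ := normHom

lemma Complex.abs_apply' (z : ℂ) : Complex.abs z = ‖z‖ := rfl

lemma Complex.abs_exp (z : ℂ) : Complex.abs (Complex.exp z) = Real.exp z.re := by
  rw [Complex.abs_apply', Complex.norm_exp]

lemma Complex.abs_ofReal (x : ℝ) : Complex.abs (x : ℂ) = |x| := by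
  rw [Complex.abs_apply', Complex.norm_real, Real.norm_eq_abs]

@[simp]
lemma Complex.abs_I : Complex.abs Complex.I = 1 := by
  rw [Complex.abs_apply', Complex.norm_I]

@[simp]
lemma Complex.abs_two : Complex.abs (2 : ℂ) = 2 := by
  rw [Complex.abs_apply']; norm_num

lemma Complex.abs_natCast (n : ℕ) : Complex.abs (n : ℂ) = n := by
  rw [Complex.abs_apply', Complex.norm_natCast]

section VerlindeAux
open Polynomial Finset

open Complex in
lemma abs_exp_sub_exp (x y : ℝ) : Complex.abs (Complex.exp (x*I) - Complex.exp (y*I))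
    = 2 * |Real.sin ((x-y)/2)| := by
  have h : Complex.exp ((x:ℂ)*I) - Complex.exp ((y:ℂ)*I)
      = Complex.exp ((((x+y)/2 :ℝ):ℂ)*I) * (2 * Complex.sin (((x-y)/2:ℝ):ℂ) * I) := by
    rw [Complex.exp_mul_I, Complex.exp_mul_I, Complex.exp_mul_I]
    push_cast
    rw [show (x:ℂ) = (x+y)/2 + (x-y)/2 by ring, show (y:ℂ) = (x+y)/2 - (x-y)/2 by ring]
    rw [Complex.cos_add, Complex.sin_add, Complex.cos_sub, Complex.sin_sub]
    ring_nf
    simp only [Complex.I_sq]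
    ring
  rw [h, map_mul, Complex.abs_exp]
  rw [map_mul, map_mul]
  rw [← Complex.ofReal_sin, Complex.abs_ofReal]
  simp [mul_comm]


lemma prod_erase_root {n : ℕ} (hn : 0 < n) {ω : ℂ} (hω : IsPrimitiveRoot ω n)
    {a : ℕ} (ha : a ∈ Finset.range n) :
    ∏ k ∈ (Finset.range n).erase a, (ω ^ a - ω ^ k) = n * (ω ^ a) ^ (n - 1) := by
  have hfull : (X ^ n - C 1 : ℂ[X]) = ∏ i ∈ Finset.range n, (X - C (ω ^ i)) := by
    have := X_pow_sub_C_eq_prod hω hn (one_pow n)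
    simpa using this
  have hsplit : (X - C (ω ^ a)) * ∏ k ∈ (Finset.range n).erase a, (X - C (ω ^ k))
      = X ^ n - C 1 := by
    rw [hfull]; exact Finset.mul_prod_erase (Finset.range n) (fun i => X - C (ω ^ i)) ha
  have hgeom : (X - C (ω ^ a)) * (∑ i ∈ Finset.range n, X ^ i * (C (ω ^ a)) ^ (n - 1 - i))
      = X ^ n - C 1 := by
    have hc : (C (ω ^ a) : ℂ[X]) ^ n = C 1 := by
      rw [← map_pow, ← pow_mul, mul_comm a n, pow_mul, hω.pow_eq_one, one_pow]
    rw [mul_comm, geom_sum₂_mul, hc]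
  have hcancel : (∏ k ∈ (Finset.range n).erase a, (X - C (ω ^ k)))
      = ∑ i ∈ Finset.range n, X ^ i * (C (ω ^ a)) ^ (n - 1 - i) :=
    mul_left_cancel₀ (X_sub_C_ne_zero (ω ^ a)) (hsplit.trans hgeom.symm)
  have h1 : Polynomial.eval (ω ^ a) (∏ k ∈ (Finset.range n).erase a, (X - C (ω ^ k)))
      = ∏ k ∈ (Finset.range n).erase a, (ω ^ a - ω ^ k) := by
    simp [eval_prod]
  have h2 : Polynomial.eval (ω ^ a) (∑ i ∈ Finset.range n, X ^ i * (C (ω ^ a)) ^ (n - 1 - i))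
      = n * (ω ^ a) ^ (n - 1) := by
    simp only [eval_finset_sum, eval_mul, eval_pow, eval_X, eval_C]
    have : ∀ i ∈ Finset.range n, (ω ^ a) ^ i * (ω ^ a) ^ (n - 1 - i) = (ω ^ a) ^ (n - 1) := by
      intro i hi
      rw [← pow_add, Nat.add_sub_cancel' (Nat.le_sub_one_of_lt (Finset.mem_range.mp hi))]
    rw [Finset.sum_congr rfl this, Finset.sum_const, Finset.card_range, nsmul_eq_mul]
  rw [← h1, hcancel, h2]


lemma key_mid (s : ℕ) (hs : 3 ≤ s) {ω : ℂ} (hω : IsPrimitiveRoot ω (2*s))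
    {a : ℕ} (ha1 : 1 ≤ a) (has : a < s) :
    (∏ b ∈ (Finset.range s).erase a, ((ω^a - ω^b) * (ω^a - ω^(2*s-b))))
      * ((ω^a - ω^s) * (ω^a - ω^(2*s-a)))
    = (2*s) * (ω^a)^(2*s-1) * (ω^a - 1) := by
  have h2s : 0 < 2*s := by omega
  have hω2s : ω^(2*s) = 1 := hω.pow_eq_one
  have hW := prod_erase_root h2s hω (a := a) (Finset.mem_range.mpr (by omega))
  have hdecomp : (Finset.range (2*s)).erase a
      = ((Finset.range s).erase a) ∪ (Finset.Ico s (2*s)) := by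
    ext k; simp only [Finset.mem_erase, Finset.mem_range, Finset.mem_union, Finset.mem_Ico]
    omega
  have hdisj : Disjoint ((Finset.range s).erase a) (Finset.Ico s (2*s)) := by
    simp only [Finset.disjoint_left, Finset.mem_erase, Finset.mem_range, Finset.mem_Ico]
    intro k hk hk2; omega
  rw [hdecomp, Finset.prod_union hdisj] at hW
  have hins : Finset.Ico s (2*s) = insert s (Finset.Ico (s+1) (2*s)) := by
    ext k; simp only [Finset.mem_Ico, Finset.mem_insert]; omega
  rw [hins, Finset.prod_insert (by simp)] at hW
  have hmm : 2*s-a ∈ Finset.Ico (s+1) (2*s) := by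
    simp only [Finset.mem_Ico]; omega
  rw [← Finset.mul_prod_erase _ _ hmm] at hW
  have hV : ∏ b ∈ (Finset.range s).erase a, (ω^a - ω^(2*s-b))
      = (ω^a - 1) * ∏ k ∈ (Finset.Ico (s+1) (2*s)).erase (2*s-a), (ω^a - ω^k) := by
    have h0mem : (0:ℕ) ∈ (Finset.range s).erase a := by
      simp only [Finset.mem_erase, Finset.mem_range]; omega
    rw [← Finset.mul_prod_erase _ _ h0mem, Nat.sub_zero, hω2s]
    congr 1
    refine Finset.prod_bij' (fun b _ => 2*s - b) (fun k _ => 2*s - k) ?_ ?_ ?_ ?_ ?_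
    · intro b hb
      simp only [Finset.mem_erase, Finset.mem_range] at hb
      simp only [Finset.mem_erase, Finset.mem_Ico]
      omega
    · intro k hk
      simp only [Finset.mem_erase, Finset.mem_Ico] at hk
      simp only [Finset.mem_erase, Finset.mem_range]
      omega
    · intro b hb
      simp only [Finset.mem_erase, Finset.mem_range] at hb
      show 2*s - (2*s - b) = b; omega
    · intro k hk
      simp only [Finset.mem_erase, Finset.mem_Ico] at hk
      show 2*s - (2*s - k) = k; omega
    · intro b hb; rfl
  rw [Finset.prod_mul_distrib, hV]
  push_cast at hW ⊢
  linear_combination (ω^a - 1) * hW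

lemma mirror_bij (s : ℕ) {ω : ℂ} (z : ℂ) :
    ∏ b ∈ (Finset.range s).erase 0, (z - ω^(2*s-b))
      = ∏ k ∈ Finset.Ico (s+1) (2*s), (z - ω^k) := by
  refine Finset.prod_bij' (fun b _ => 2*s - b) (fun k _ => 2*s - k) ?_ ?_ ?_ ?_ ?_
  · intro b hb
    simp only [Finset.mem_erase, Finset.mem_range] at hb
    simp only [Finset.mem_Ico]; omega
  · intro k hk
    simp only [Finset.mem_Ico] at hk
    simp only [Finset.mem_erase, Finset.mem_range]; omega
  · intro b hb
    simp only [Finset.mem_erase, Finset.mem_range] at hb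
    show 2*s - (2*s - b) = b; omega
  · intro k hk
    simp only [Finset.mem_Ico] at hk
    show 2*s - (2*s - k) = k; omega
  · intro b hb; rfl

lemma key_zero (s : ℕ) (hs : 3 ≤ s) {ω : ℂ} (hω : IsPrimitiveRoot ω (2*s)) :
    (∏ b ∈ (Finset.range s).erase 0, ((ω^0 - ω^b) * (ω^0 - ω^(2*s-b)))) * (ω^0 - ω^s)
      = 2*s := by
  have h2s : 0 < 2*s := by omega
  have hW := prod_erase_root h2s hω (a := 0) (Finset.mem_range.mpr (by omega))
  have hdecomp : (Finset.range (2*s)).erase 0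
      = ((Finset.range s).erase 0) ∪ (Finset.Ico s (2*s)) := by
    ext k; simp only [Finset.mem_erase, Finset.mem_range, Finset.mem_union, Finset.mem_Ico]
    omega
  have hdisj : Disjoint ((Finset.range s).erase 0) (Finset.Ico s (2*s)) := by
    simp only [Finset.disjoint_left, Finset.mem_erase, Finset.mem_range, Finset.mem_Ico]
    intro k hk hk2; omega
  rw [hdecomp, Finset.prod_union hdisj] at hW
  have hins : Finset.Ico s (2*s) = insert s (Finset.Ico (s+1) (2*s)) := by
    ext k; simp only [Finset.mem_Ico, Finset.mem_insert]; omega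
  rw [hins, Finset.prod_insert (by simp)] at hW
  rw [Finset.prod_mul_distrib, mirror_bij s (ω^0)]
  simp only [pow_zero, one_pow, mul_one] at hW ⊢
  push_cast at hW ⊢
  linear_combination hW

lemma key_s (s : ℕ) (hs : 3 ≤ s) {ω : ℂ} (hω : IsPrimitiveRoot ω (2*s)) :
    (∏ b ∈ (Finset.range s).erase 0, ((ω^s - ω^b) * (ω^s - ω^(2*s-b)))) * (ω^s - ω^0)
      = 2*s*(ω^s)^(2*s-1) := by
  have h2s : 0 < 2*s := by omega
  have hW := prod_erase_root h2s hω (a := s) (Finset.mem_range.mpr (by omega))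
  have hdecomp : (Finset.range (2*s)).erase s
      = (Finset.range s) ∪ (Finset.Ico (s+1) (2*s)) := by
    ext k; simp only [Finset.mem_erase, Finset.mem_range, Finset.mem_union, Finset.mem_Ico]
    omega
  have hdisj : Disjoint (Finset.range s) (Finset.Ico (s+1) (2*s)) := by
    simp only [Finset.disjoint_left, Finset.mem_range, Finset.mem_Ico]
    intro k hk hk2; omega
  rw [hdecomp, Finset.prod_union hdisj] at hW
  have hins : Finset.range s = insert 0 ((Finset.range s).erase 0) := by
    ext k; simp only [Finset.mem_insert, Finset.mem_erase, Finset.mem_range]; omega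
  rw [hins, Finset.prod_insert (by simp)] at hW
  rw [Finset.prod_mul_distrib, mirror_bij s (ω^s)]
  simp only [pow_zero] at hW ⊢
  push_cast at hW ⊢
  linear_combination hW

end VerlindeAux

/-- For `s ≥ 3`, `r = 2s`, the product over unordered pairs `{a,b}` of
distinct elements of `U_s = {0,1,…,s−1}` of `16·sin²(π(a−b)/r)·sin²(π(a+b)/r)`
equals `r^(s−1)`. -/
theorem verlinde_Ds_Us (s : ℕ) (hs : 3 ≤ s) :
    (∏ p ∈ (Finset.range s).offDiag.filter (fun p => p.1 < p.2),
        (16 * Real.sin (Real.pi * ((p.1 : ℝ) - (p.2 : ℝ)) / (2 * s)) ^ 2 *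
          Real.sin (Real.pi * ((p.1 : ℝ) + (p.2 : ℝ)) / (2 * s)) ^ 2)) =
      (2 * (s : ℝ)) ^ (s - 1) := by
  have hs0 : (s : ℝ) ≠ 0 := Nat.cast_ne_zero.mpr (by omega)
  have hsp : (0:ℝ) < s := Nat.cast_pos.mpr (by omega)
  set F : ℕ × ℕ → ℝ := fun p =>
    16 * Real.sin (Real.pi * ((p.1 : ℝ) - (p.2 : ℝ)) / (2 * s)) ^ 2 *
      Real.sin (Real.pi * ((p.1 : ℝ) + (p.2 : ℝ)) / (2 * s)) ^ 2 with hFdef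
  set ω : ℂ := Complex.exp (2*(Real.pi:ℂ)*Complex.I/(2*(s:ℂ))) with hw_def
  have hprim : IsPrimitiveRoot ω (2*s) := by
    have h := Complex.isPrimitiveRoot_exp (2*s) (by omega)
    have : Complex.exp (2 * Real.pi * Complex.I / (2*s : ℕ)) = ω := by
      rw [hw_def]; congr 1; push_cast; ring
    rwa [this] at h
  have hpow : ∀ k : ℕ, ω^k = Complex.exp ((Real.pi*k/s : ℝ)*Complex.I) := by
    intro k
    rw [hw_def, ← Complex.exp_nat_mul]
    congr 1
    have hsc : (s:ℂ) ≠ 0 := by exact_mod_cast hs0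
    push_cast
    field_simp
  have habs : ∀ a b : ℕ, Complex.abs (ω^a - ω^b)
      = 2*|Real.sin (Real.pi*((a:ℝ)-(b:ℝ))/(2*s))| := by
    intro a b
    rw [hpow a, hpow b, abs_exp_sub_exp]
    congr 2
    field_simp
  have habsw : ∀ k : ℕ, Complex.abs (ω^k) = 1 := by
    intro k
    rw [hpow k, Complex.abs_exp]
    simp
  -- conversion of the real factor to a complex abs
  have hF : ∀ a b : ℕ, b ≤ 2*s → F (a, b)
      = Complex.abs ((ω^a - ω^b) * (ω^a - ω^(2*s-b)))^2 := by
    intro a b hb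
    rw [map_mul, mul_pow, habs, habs]
    rw [Nat.cast_sub hb]
    rw [show Real.pi*((a:ℝ) - ((2*s:ℕ) - (b:ℝ)))/(2*s)
        = Real.pi*((a:ℝ)+(b:ℝ))/(2*s) - Real.pi from by push_cast; field_simp; ring]
    rw [Real.sin_sub_pi]
    simp only [hFdef, abs_neg, mul_pow, sq_abs]
    ring
  set G : ℕ → ℝ := fun a => ∏ b ∈ (Finset.range s).erase a, F (a, b) with hGdef
  have hG : ∀ a : ℕ, G a
      = Complex.abs (∏ b ∈ (Finset.range s).erase a, ((ω^a - ω^b) * (ω^a - ω^(2*s-b))))^2 := by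
    intro a
    rw [map_prod, ← Finset.prod_pow]
    refine Finset.prod_congr rfl (fun b hb => ?_)
    have hbs : b ≤ 2*s := by
      have := Finset.mem_range.mp (Finset.mem_of_mem_erase hb); omega
    exact hF a b hbs
  -- the middle trig values
  have hGa : ∀ a ∈ (Finset.range s).erase 0,
      G a * ((2*Real.cos (Real.pi*(a:ℝ)/(2*s)))^2)^2 = 4*(s:ℝ)^2 := by
    intro a ha
    rw [Finset.mem_erase, Finset.mem_range] at ha
    set x : ℝ := Real.pi*(a:ℝ)/(2*s) with hx_def
    have hx1 : 0 < x := by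
      apply div_pos (mul_pos Real.pi_pos (by exact_mod_cast Nat.pos_of_ne_zero ha.1))
      positivity
    have hx2 : x < Real.pi/2 := by
      rw [hx_def, div_lt_div_iff₀ (by positivity) (by norm_num : (0:ℝ) < 2)]
      have has : (a:ℝ) < s := by exact_mod_cast ha.2
      nlinarith [Real.pi_pos]
    have hsinx : 0 < Real.sin x := Real.sin_pos_of_pos_of_lt_pi hx1
      (lt_trans hx2 (by linarith [Real.pi_pos]))
    have hcosx : 0 < Real.cos x := Real.cos_pos_of_mem_Ioo ⟨by linarith, hx2⟩
    have hk := key_mid s hs hprim (Nat.one_le_iff_ne_zero.mpr ha.1) ha.2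
    rw [← pow_mul] at hk
    have hE := congrArg Complex.abs hk
    rw [map_mul, map_mul, map_mul, map_mul, habsw] at hE
    -- evaluate the three abs values
    have v1 : Complex.abs (ω^a - ω^s) = 2*Real.cos x := by
      rw [habs]
      rw [show Real.pi*((a:ℝ)-(s:ℝ))/(2*s) = -(Real.pi/2 - x) from by
        rw [hx_def]; field_simp; ring]
      rw [Real.sin_neg, Real.sin_pi_div_two_sub, abs_neg, abs_of_pos hcosx]
    have v2 : Complex.abs (ω^a - ω^(2*s-a)) = 2*(2*Real.sin x*Real.cos x) := by
      rw [habs, Nat.cast_sub (by omega : a ≤ 2*s)]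
      rw [show Real.pi*((a:ℝ)-((2*s:ℕ)-(a:ℝ)))/(2*s) = 2*x - Real.pi from by
        rw [hx_def]; push_cast; field_simp; ring]
      rw [Real.sin_sub_pi, ← Real.sin_two_mul, abs_neg, abs_of_pos]
      exact Real.sin_pos_of_pos_of_lt_pi (by linarith) (by linarith)
    have v3 : Complex.abs (ω^a - 1) = 2*Real.sin x := by
      have : (1:ℂ) = ω^0 := by rw [pow_zero]
      rw [this, habs]
      rw [show Real.pi*((a:ℝ)-((0:ℕ):ℝ))/(2*s) = x from by rw [hx_def]; push_cast; ring]
      rw [abs_of_pos hsinx]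
    rw [v1, v2, v3] at hE
    rw [show Complex.abs (2*(s:ℂ)) = 2*(s:ℝ) from by
      rw [map_mul, Complex.abs_two, Complex.abs_natCast]] at hE
    have hE2 := congrArg (fun t => t^2) hE
    rw [hG a]
    apply mul_right_cancel₀ (show ((2*Real.sin x)^2 : ℝ) ≠ 0 from pow_ne_zero _ (by positivity))
    push_cast at hE2 ⊢
    linear_combination hE2
  -- G 0 = s^2
  have habs0s : Complex.abs (ω^0 - ω^s) = 2 := by
    rw [habs]
    rw [show Real.pi*(((0:ℕ):ℝ)-(s:ℝ))/(2*s) = -(Real.pi/2) from by push_cast; field_simp; ring]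
    rw [Real.sin_neg, Real.sin_pi_div_two, abs_neg, abs_one]
    norm_num
  have hG0 : G 0 = (s:ℝ)^2 := by
    have hk := key_zero s hs hprim
    have hE := congrArg Complex.abs hk
    rw [map_mul, habs0s, map_mul, Complex.abs_two, Complex.abs_natCast] at hE
    have : Complex.abs (∏ b ∈ (Finset.range s).erase 0,
        ((ω^0 - ω^b) * (ω^0 - ω^(2*s-b)))) = s := by linarith
    rw [hG 0, this]
  -- cos values at a = s
  have habs_s0 : Complex.abs (ω^s - ω^0) = 2 := by
    rw [habs]
    rw [show Real.pi*((s:ℝ)-((0:ℕ):ℝ))/(2*s) = Real.pi/2 from by push_cast; field_simp; ring]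
    rw [Real.sin_pi_div_two, abs_one]
    norm_num
  have hvsb : ∀ b ∈ (Finset.range s).erase 0,
      Complex.abs ((ω^s - ω^b) * (ω^s - ω^(2*s-b)))
        = (2*Real.cos (Real.pi*(b:ℝ)/(2*s)))^2 := by
    intro b hb
    rw [Finset.mem_erase, Finset.mem_range] at hb
    set y : ℝ := Real.pi*(b:ℝ)/(2*s) with hy_def
    have hy1 : 0 < y := by
      apply div_pos (mul_pos Real.pi_pos (by exact_mod_cast Nat.pos_of_ne_zero hb.1))
      positivity
    have hy2 : y < Real.pi/2 := by
      rw [hy_def, div_lt_div_iff₀ (by positivity) (by norm_num : (0:ℝ) < 2)]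
      have hbs : (b:ℝ) < s := by exact_mod_cast hb.2
      nlinarith [Real.pi_pos]
    have hcosy : 0 < Real.cos y := Real.cos_pos_of_mem_Ioo ⟨by linarith, hy2⟩
    have w1 : Complex.abs (ω^s - ω^b) = 2*Real.cos y := by
      rw [habs]
      rw [show Real.pi*((s:ℝ)-(b:ℝ))/(2*s) = Real.pi/2 - y from by
        rw [hy_def]; field_simp]
      rw [Real.sin_pi_div_two_sub, abs_of_pos hcosy]
    have w2 : Complex.abs (ω^s - ω^(2*s-b)) = 2*Real.cos y := by
      rw [habs, Nat.cast_sub (by omega : b ≤ 2*s)]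
      rw [show Real.pi*((s:ℝ)-((2*s:ℕ)-(b:ℝ)))/(2*s) = -(Real.pi/2 - y) from by
        rw [hy_def]; push_cast; field_simp; ring]
      rw [Real.sin_neg, Real.sin_pi_div_two_sub, abs_neg, abs_of_pos hcosy]
    rw [map_mul, w1, w2]
    ring
  have hcos : ∏ b ∈ (Finset.range s).erase 0, (2*Real.cos (Real.pi*(b:ℝ)/(2*s)))^2 = (s:ℝ) := by
    have hk := key_s s hs hprim
    rw [← pow_mul] at hk
    have hE := congrArg Complex.abs hk
    rw [map_mul, map_prod, habs_s0, map_mul, habsw] at hE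
    rw [show Complex.abs (2*(s:ℂ)) = 2*(s:ℝ) from by
      rw [map_mul, Complex.abs_two, Complex.abs_natCast]] at hE
    rw [Finset.prod_congr rfl hvsb] at hE
    linarith
  -- symmetry of F
  have hFsymm : ∀ p : ℕ × ℕ, F p = F p.swap := by
    intro p
    simp only [hFdef, Prod.fst_swap, Prod.snd_swap]
    rw [show Real.pi*((p.2:ℝ)-(p.1:ℝ))/(2*s) = -(Real.pi*((p.1:ℝ)-(p.2:ℝ))/(2*s)) from by ring,
      Real.sin_neg, show (p.2:ℝ)+(p.1:ℝ) = (p.1:ℝ)+(p.2:ℝ) from by ring]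
    ring
  -- square of the filtered product is the offDiag product
  have hsq : (∏ p ∈ (Finset.range s).offDiag.filter (fun p => p.1 < p.2), F p)^2
      = ∏ p ∈ (Finset.range s).offDiag, F p := by
    rw [← Finset.prod_filter_mul_prod_filter_not ((Finset.range s).offDiag)
      (fun p => p.1 < p.2), sq]
    congr 1
    refine Finset.prod_bij' (fun p _ => Prod.swap p) (fun p _ => Prod.swap p) ?_ ?_ ?_ ?_ ?_
    · intro p hp
      simp only [Finset.mem_filter, Finset.mem_offDiag, Finset.mem_range] at hp ⊢
      refine ⟨⟨hp.1.2.1, hp.1.1, ?_⟩, ?_⟩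
      · exact fun h => hp.1.2.2 h.symm
      · simp only [Prod.fst_swap, Prod.snd_swap]; omega
    · intro p hp
      simp only [Finset.mem_filter, Finset.mem_offDiag, Finset.mem_range] at hp ⊢
      refine ⟨⟨hp.1.2.1, hp.1.1, ?_⟩, ?_⟩
      · exact fun h => hp.1.2.2 h.symm
      · simp only [Prod.fst_swap, Prod.snd_swap]
        have h1 := hp.1.2.2
        have h2 := hp.2
        omega
    · intro p _; exact Prod.swap_swap p
    · intro p _; exact Prod.swap_swap p
    · intro p _; exact hFsymm p
  -- offDiag product as iterated product
  have hoffprod : ∏ p ∈ (Finset.range s).offDiag, F p = ∏ a ∈ Finset.range s, G a := by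
    have h1 : (Finset.range s).offDiag
        = ((Finset.range s) ×ˢ (Finset.range s)).filter (fun p => p.1 ≠ p.2) := by
      ext p
      simp only [Finset.mem_offDiag, Finset.mem_filter, Finset.mem_product]
      tauto
    rw [h1, Finset.prod_filter, Finset.prod_product]
    refine Finset.prod_congr rfl (fun a _ => ?_)
    have h2 : (Finset.range s).erase a = (Finset.range s).filter (fun b => a ≠ b) := by
      ext b
      simp only [Finset.mem_erase, Finset.mem_filter]
      tauto
    rw [hGdef]
    simp only
    rw [h2, Finset.prod_filter]
  -- assemble
  have h0mem : (0:ℕ) ∈ Finset.range s := Finset.mem_range.mpr (by omega)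
  have h1 : ∏ a ∈ (Finset.range s).erase 0,
      (G a * ((2*Real.cos (Real.pi*(a:ℝ)/(2*s)))^2)^2) = (4*(s:ℝ)^2)^(s-1) := by
    rw [Finset.prod_congr rfl hGa, Finset.prod_const, Finset.card_erase_of_mem h0mem,
      Finset.card_range]
  rw [Finset.prod_mul_distrib, Finset.prod_pow, hcos] at h1
  have hX : (∏ a ∈ Finset.range s, G a) = (4*(s:ℝ)^2)^(s-1) := by
    rw [← Finset.mul_prod_erase (Finset.range s) G h0mem, hG0]
    apply mul_left_cancel₀ (pow_ne_zero 2 hs0)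
    rw [← mul_assoc, ← h1]
    ring
  have hP2 : (∏ p ∈ (Finset.range s).offDiag.filter (fun p => p.1 < p.2), F p)^2
      = ((2*(s:ℝ))^(s-1))^2 := by
    rw [hsq, hoffprod, hX, ← pow_mul, mul_comm (s-1) 2, pow_mul]
    congr 1
    ring
  have hPnn : 0 ≤ ∏ p ∈ (Finset.range s).offDiag.filter (fun p => p.1 < p.2), F p := by
    refine Finset.prod_nonneg (fun p _ => ?_)
    simp only [hFdef]
    positivity
  have hQnn : (0:ℝ) ≤ (2*(s:ℝ))^(s-1) := by positivity
  nlinarith [hP2, hPnn, hQnn]
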